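/- For every 2-player cake-cutting instance, every integer k ≥ 1, and every k-piece allocation (A_1, A_2), there exists a contiguous allocation (B_1, B_2) such that V_1(A_1) + V_2(A_2) ≤ (2 − 1/k)·(V_1(B_1) + V_2(B_2)). (Hence the maximum utilitarian welfare over k-piece allocations is at most 2 − 1/k times the maximum utilitarian welfare over contiguous allocations, i.e., POIU(2,k) ≤ 2 − 1/k.) -/

import Mathlib

open MeasureTheory Set

/-- An `n`-player cake-cutting instance: continuous nonnegative density functions
on `[0,1]`, each of total integral `1`. -/
structure CakeInstance (n : ℕ) where
  d : Fin n → ℝ → ℝ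
  cont : ∀ i, ContinuousOn (d i) (Set.Icc 0 1)
  nonneg : ∀ i, ∀ x ∈ Set.Icc (0:ℝ) 1, 0 ≤ d i x
  total : ∀ i, ∫ x in (0:ℝ)..1, d i x = 1

namespace CakeInstance

/-- Value of player `i` for the interval `[a,b]`. -/
noncomputable def ival {n : ℕ} (C : CakeInstance n) (i : Fin n) (a b : ℝ) : ℝ :=
  ∫ x in a..b, C.d i x

/-- Value of player `i` for a set `S`. -/
noncomputable def sval {n : ℕ} (C : CakeInstance n) (i : Fin n) (S : Set ℝ) : ℝ :=
  ∫ x in S, C.d i x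

end CakeInstance

/-- A contiguous allocation: weakly increasing cut points `x 0 = 0 ≤ … ≤ x n = 1`
together with a permutation `σ` assigning the `j`-th interval `[x j, x (j+1)]`
to player `σ j`. -/
structure ContigAlloc (n : ℕ) where
  x : Fin (n+1) → ℝ
  mono : Monotone x
  first : x 0 = 0
  last : x (Fin.last n) = 1
  σ : Equiv.Perm (Fin n)

/-- The (closed) interval received by player `i` in a contiguous allocation. -/
def cpiece {n : ℕ} (A : ContigAlloc n) (i : Fin n) : Set ℝ :=
  Set.Icc (A.x (A.σ.symm i).castSucc) (A.x (A.σ.symm i).succ)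

/-- Value of player `i` for the interval received by player `j`. -/
noncomputable def cval {n : ℕ} (C : CakeInstance n) (A : ContigAlloc n) (i j : Fin n) : ℝ :=
  C.ival i (A.x (A.σ.symm j).castSucc) (A.x (A.σ.symm j).succ)

/-- Utilitarian welfare of a contiguous allocation. -/
noncomputable def cWelfare {n : ℕ} (C : CakeInstance n) (A : ContigAlloc n) : ℝ :=
  ∑ i, cval C A i i

/-- Egalitarian welfare of a contiguous allocation. -/
noncomputable def cEgal {n : ℕ} (C : CakeInstance n) (A : ContigAlloc n) : ℝ :=
  ⨅ i, cval C A i i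

/-- A contiguous allocation is envy-free if nobody prefers another player's interval. -/
def cEnvyFree {n : ℕ} (C : CakeInstance n) (A : ContigAlloc n) : Prop :=
  ∀ i j, cval C A i j ≤ cval C A i i

/-- A `k`-piece allocation: each player `i` receives the union of (at most) `k`
closed intervals `[lo i m, hi i m] ⊆ [0,1]` (possibly degenerate); all these
intervals are pairwise non-overlapping and together they cover `[0,1]`. -/
structure KPieceAlloc (n k : ℕ) where
  lo : Fin n → Fin k → ℝ
  hi : Fin n → Fin k → ℝ
  le : ∀ i m, lo i m ≤ hi i m
  sub : ∀ i m, Set.Icc (lo i m) (hi i m) ⊆ Set.Icc (0:ℝ) 1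
  nonoverlap : ∀ i m i' m', (i, m) ≠ (i', m') →
      Set.Ioo (lo i m) (hi i m) ∩ Set.Ioo (lo i' m') (hi i' m') = ∅
  cover : (⋃ i, ⋃ m, Set.Icc (lo i m) (hi i m)) = Set.Icc (0:ℝ) 1

/-- Value of player `i` for the portion received by player `j` in a `k`-piece allocation. -/
noncomputable def kval {n k : ℕ} (C : CakeInstance n) (A : KPieceAlloc n k) (i j : Fin n) : ℝ :=
  ∑ m, C.ival i (A.lo j m) (A.hi j m)

/-- Utilitarian welfare of a `k`-piece allocation. -/
noncomputable def kWelfare {n k : ℕ} (C : CakeInstance n) (A : KPieceAlloc n k) : ℝ :=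
  ∑ i, kval C A i i

/-- Egalitarian welfare of a `k`-piece allocation. -/
noncomputable def kEgal {n k : ℕ} (C : CakeInstance n) (A : KPieceAlloc n k) : ℝ :=
  ⨅ i, kval C A i i

/-- A `k`-piece allocation is envy-free if nobody prefers another player's portion. -/
def kEnvyFree {n k : ℕ} (C : CakeInstance n) (A : KPieceAlloc n k) : Prop :=
  ∀ i j, kval C A i j ≤ kval C A i i

/-- A witness that an `n`-player cake-cutting instance lies in the class `X(k)`:
cut points `0 = c 0 < c 1 < … < c (n*k) = 1` and an ownership map under which each
player owns exactly `k` of the pieces `[c j, c (j+1)]` and values the unowned pieces `0`. -/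
structure XkWitness {n : ℕ} (C : CakeInstance n) (k : ℕ) where
  c : Fin (n*k+1) → ℝ
  mono : StrictMono c
  first : c 0 = 0
  last : c (Fin.last (n*k)) = 1
  owner : Fin (n*k) → Fin n
  ownCount : ∀ i : Fin n, (Finset.univ.filter fun j => owner j = i).card = k
  zeroVal : ∀ (i : Fin n) (j : Fin (n*k)), owner j ≠ i →
      C.ival i (c j.castSucc) (c j.succ) = 0

/-- The `j`-th owned piece, as a set. -/
def XkWitness.pieceSet {n k : ℕ} {C : CakeInstance n} (W : XkWitness C k)
    (j : Fin (n*k)) : Set ℝ :=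
  Set.Icc (W.c j.castSucc) (W.c j.succ)

/-- Value of player `i` for the `j`-th owned piece. -/
noncomputable def XkWitness.pieceVal {n k : ℕ} {C : CakeInstance n} (W : XkWitness C k)
    (i : Fin n) (j : Fin (n*k)) : ℝ :=
  C.ival i (W.c j.castSucc) (W.c j.succ)

/-- A `k`-piece allocation gives each player exactly the pieces he owns:
every owned piece occurs among its owner's allocated intervals. -/
def XkWitness.givesOwnedPieces {n k : ℕ} {C : CakeInstance n} (W : XkWitness C k)
    (A : KPieceAlloc n k) : Prop :=
  ∀ j : Fin (n*k), ∃ m : Fin k,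
    A.lo (W.owner j) m = W.c j.castSucc ∧ A.hi (W.owner j) m = W.c j.succ

section PoiuAux

open MeasureTheory intervalIntegral

lemma poiu_lo_mem {k : ℕ} (A : KPieceAlloc 2 k) (e : Fin 2) (m : Fin k) :
    A.lo e m ∈ Set.Icc (0:ℝ) 1 := A.sub e m ⟨le_rfl, A.le e m⟩

lemma poiu_hi_mem {k : ℕ} (A : KPieceAlloc 2 k) (e : Fin 2) (m : Fin k) :
    A.hi e m ∈ Set.Icc (0:ℝ) 1 := A.sub e m ⟨A.le e m, le_rfl⟩

lemma poiu_integ (C : CakeInstance 2) (i : Fin 2) {a b : ℝ}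
    (ha : a ∈ Set.Icc (0:ℝ) 1) (hb : b ∈ Set.Icc (0:ℝ) 1) :
    IntervalIntegrable (C.d i) volume a b :=
  ((C.cont i).mono (Set.uIcc_subset_Icc ha hb)).intervalIntegrable

lemma poiu_partition {k : ℕ} (A : KPieceAlloc 2 k) (d : ℝ → ℝ)
    (hd : IntegrableOn d (Set.Icc (0:ℝ) 1) volume) :
    ∑ j : Fin 2 × Fin k, ∫ x in (A.lo j.1 j.2)..(A.hi j.1 j.2), d x
      = ∫ x in (0:ℝ)..1, d x := by
  classical
  have hIocsub : ∀ j : Fin 2 × Fin k,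
      Set.Ioc (A.lo j.1 j.2) (A.hi j.1 j.2) ⊆ Set.Icc (0:ℝ) 1 :=
    fun j => Set.Ioc_subset_Icc_self.trans (A.sub j.1 j.2)
  have hint : ∀ j : Fin 2 × Fin k,
      Integrable ((Set.Ioc (A.lo j.1 j.2) (A.hi j.1 j.2)).indicator d) volume :=
    fun j => (MeasureTheory.integrable_indicator_iff measurableSet_Ioc).2
      (hd.mono_set (hIocsub j))
  set E : Set ℝ := ⋃ j : Fin 2 × Fin k, {A.lo j.1 j.2, A.hi j.1 j.2} with hE
  have hEfin : E.Finite := Set.finite_iUnion fun j => (Set.finite_singleton _).insert _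
  have hae : ∀ᵐ x : ℝ, x ∉ E := measure_eq_zero_iff_ae_notMem.1 (hEfin.measure_zero _)
  have key : ∀ᵐ x : ℝ,
      (∑ j : Fin 2 × Fin k, (Set.Ioc (A.lo j.1 j.2) (A.hi j.1 j.2)).indicator d x)
        = (Set.Ioc (0:ℝ) 1).indicator d x := by
    filter_upwards [hae] with x hx
    have hxlo : ∀ j : Fin 2 × Fin k, x ≠ A.lo j.1 j.2 := by
      intro j h
      exact hx (Set.mem_iUnion.2 ⟨j, by simp [h]⟩)
    have hxhi : ∀ j : Fin 2 × Fin k, x ≠ A.hi j.1 j.2 := by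
      intro j h
      exact hx (Set.mem_iUnion.2 ⟨j, by simp [h]⟩)
    by_cases hx01 : x ∈ Set.Ioc (0:ℝ) 1
    · obtain ⟨j0, hj0⟩ : ∃ j : Fin 2 × Fin k,
          x ∈ Set.Icc (A.lo j.1 j.2) (A.hi j.1 j.2) := by
        have hx' : x ∈ Set.Icc (0:ℝ) 1 := Set.Ioc_subset_Icc_self hx01
        rw [← A.cover] at hx'
        simp only [Set.mem_iUnion] at hx'
        obtain ⟨i, m, hm⟩ := hx'
        exact ⟨(i, m), hm⟩
      have hj0' : x ∈ Set.Ioo (A.lo j0.1 j0.2) (A.hi j0.1 j0.2) :=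
        ⟨lt_of_le_of_ne hj0.1 (Ne.symm (hxlo j0)), lt_of_le_of_ne hj0.2 (hxhi j0)⟩
      rw [Finset.sum_eq_single_of_mem j0 (Finset.mem_univ _)]
      · rw [Set.indicator_of_mem (Set.Ioo_subset_Ioc_self hj0'),
          Set.indicator_of_mem hx01]
      · intro j _ hne
        apply Set.indicator_of_notMem
        intro hmem
        have hj' : x ∈ Set.Ioo (A.lo j.1 j.2) (A.hi j.1 j.2) :=
          ⟨hmem.1, lt_of_le_of_ne hmem.2 (hxhi j)⟩
        have hnov := A.nonoverlap j.1 j.2 j0.1 j0.2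
          (by simpa [Prod.ext_iff] using hne)
        have hx2 : x ∈ (Set.Ioo (A.lo j.1 j.2) (A.hi j.1 j.2)
            ∩ Set.Ioo (A.lo j0.1 j0.2) (A.hi j0.1 j0.2)) := ⟨hj', hj0'⟩
        rw [hnov] at hx2
        exact hx2
    · rw [Set.indicator_of_notMem hx01, Finset.sum_eq_zero]
      intro j _
      apply Set.indicator_of_notMem
      intro hmem
      have hx' : x ∈ Set.Icc (0:ℝ) 1 := hIocsub j hmem
      have hx0 : x = 0 := by
        rcases lt_or_ge 0 x with h | h
        · exact absurd ⟨h, hx'.2⟩ hx01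
        · linarith [hx'.1]
      have h1 := hmem.1
      rw [hx0] at h1
      linarith [(poiu_lo_mem A j.1 j.2).1]
  calc ∑ j : Fin 2 × Fin k, ∫ x in (A.lo j.1 j.2)..(A.hi j.1 j.2), d x
      = ∑ j : Fin 2 × Fin k,
          ∫ x, (Set.Ioc (A.lo j.1 j.2) (A.hi j.1 j.2)).indicator d x := by
        refine Finset.sum_congr rfl fun j _ => ?_
        rw [intervalIntegral.integral_of_le (A.le j.1 j.2),
          ← MeasureTheory.integral_indicator measurableSet_Ioc]
    _ = ∫ x, ∑ j : Fin 2 × Fin k,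
          (Set.Ioc (A.lo j.1 j.2) (A.hi j.1 j.2)).indicator d x := by
        rw [MeasureTheory.integral_finset_sum _ (fun j _ => hint j)]
    _ = ∫ x, (Set.Ioc (0:ℝ) 1).indicator d x := MeasureTheory.integral_congr_ae key
    _ = ∫ x in (0:ℝ)..1, d x := by
        rw [MeasureTheory.integral_indicator measurableSet_Ioc,
          ← intervalIntegral.integral_of_le zero_le_one]

/-- The contiguous allocation cutting at `t`, with permutation `σ`. -/
noncomputable def poiuCut (t : ℝ) (h0 : 0 ≤ t) (h1 : t ≤ 1) (σ : Equiv.Perm (Fin 2)) :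
    ContigAlloc 2 where
  x := ![0, t, 1]
  mono := by
    intro a b hab
    fin_cases a <;> fin_cases b <;> simp_all <;> try linarith
  first := rfl
  last := rfl
  σ := σ

lemma poiu_cW_id (C : CakeInstance 2) (t : ℝ) (h0 : 0 ≤ t) (h1 : t ≤ 1) :
    cWelfare C (poiuCut t h0 h1 1)
      = (∫ x in (0:ℝ)..t, C.d 0 x) + ∫ x in t..1, C.d 1 x := by
  simp [cWelfare, cval, Fin.sum_univ_two, poiuCut, CakeInstance.ival,
    Equiv.Perm.one_symm, Equiv.Perm.one_apply]

lemma poiu_cW_swap (C : CakeInstance 2) (t : ℝ) (h0 : 0 ≤ t) (h1 : t ≤ 1) :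
    cWelfare C (poiuCut t h0 h1 (Equiv.swap 0 1))
      = (∫ x in t..1, C.d 0 x) + ∫ x in (0:ℝ)..t, C.d 1 x := by
  simp [cWelfare, cval, Fin.sum_univ_two, poiuCut, CakeInstance.ival,
    Equiv.symm_swap, Equiv.swap_apply_left, Equiv.swap_apply_right]

end PoiuAux

/-- For every 2-player instance, every `k ≥ 1`, and every `k`-piece
allocation, some contiguous allocation `B` satisfies
`welfare A ≤ (2 − 1/k) · welfare B`; hence `POIU(2,k) ≤ 2 − 1/k`. -/
theorem poiu_two_upper_bound (k : ℕ) (hk : 1 ≤ k) (C : CakeInstance 2)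
    (A : KPieceAlloc 2 k) :
    ∃ B : ContigAlloc 2, kWelfare C A ≤ (2 - 1/(k:ℝ)) * cWelfare C B := by
  classical
  have hk1 : (1:ℝ) ≤ (k:ℝ) := by exact_mod_cast hk
  have hkpos : (0:ℝ) < (k:ℝ) := by linarith
  have h2k1 : (0:ℝ) < 2*(k:ℝ) - 1 := by linarith
  have hcoef1 : (1:ℝ) ≤ 2 - 1/(k:ℝ) := by
    have : 1/(k:ℝ) ≤ 1 := by
      rw [div_le_one hkpos]; exact hk1
    linarith
  have h0mem : (0:ℝ) ∈ Set.Icc (0:ℝ) 1 := ⟨le_rfl, zero_le_one⟩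
  have h1mem : (1:ℝ) ∈ Set.Icc (0:ℝ) 1 := ⟨zero_le_one, le_rfl⟩
  have hint : ∀ i : Fin 2, IntegrableOn (C.d i) (Set.Icc (0:ℝ) 1) volume :=
    fun i => (C.cont i).integrableOn_Icc
  set P : Fin 2 → Fin 2 → ℝ :=
    fun i e => ∑ m, ∫ x in (A.lo e m)..(A.hi e m), C.d i x with hPdef
  have hPsum : ∀ i : Fin 2, P i 0 + P i 1 = 1 := by
    intro i
    have h := poiu_partition A (C.d i) (hint i)
    rw [C.total i, Fintype.sum_prod_type, Fin.sum_univ_two] at h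
    exact h
  have hPnonneg : ∀ i e : Fin 2, 0 ≤ P i e := by
    intro i e
    refine Finset.sum_nonneg fun m _ => ?_
    exact intervalIntegral.integral_nonneg (A.le e m)
      (fun u hu => C.nonneg i u (A.sub e m hu))
  set g : ℝ → ℝ :=
    fun t => (∫ x in (0:ℝ)..t, C.d 0 x) - ∫ x in (0:ℝ)..t, C.d 1 x with hgdef
  have hg0 : g 0 = 0 := by simp [hgdef]
  set s : ℝ := P 0 0 - P 1 0 with hsdef
  have hW : kWelfare C A = P 0 0 + P 1 1 := by
    show (∑ i, kval C A i i) = P 0 0 + P 1 1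
    rw [Fin.sum_univ_two]
    rfl
  have hWs : kWelfare C A = 1 + s := by
    have h1 := hPsum 1
    rw [hW, hsdef]; linarith
  have hs1 : s ≤ 1 := by
    have := hPsum 0
    have := hPnonneg 1 0
    have := hPnonneg 0 1
    rw [hsdef]; linarith
  -- value of cut allocations
  have hsplitint : ∀ (i : Fin 2) (t : ℝ), 0 ≤ t → t ≤ 1 →
      (∫ x in (0:ℝ)..t, C.d i x) + (∫ x in t..1, C.d i x) = 1 := by
    intro i t h0 h1
    rw [intervalIntegral.integral_add_adjacent_intervals
      (poiu_integ C i h0mem ⟨h0, h1⟩) (poiu_integ C i ⟨h0, h1⟩ h1mem), C.total i]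
  have hcWid : ∀ (t : ℝ) (h0 : 0 ≤ t) (h1 : t ≤ 1),
      cWelfare C (poiuCut t h0 h1 1) = 1 + g t := by
    intro t h0 h1
    rw [poiu_cW_id C t h0 h1, hgdef]
    have := hsplitint 1 t h0 h1
    simp only []
    linarith
  have hcWswap : ∀ (t : ℝ) (h0 : 0 ≤ t) (h1 : t ≤ 1),
      cWelfare C (poiuCut t h0 h1 (Equiv.swap 0 1)) = 1 - g t := by
    intro t h0 h1
    rw [poiu_cW_swap C t h0 h1, hgdef]
    have := hsplitint 0 t h0 h1
    simp only []
    linarith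
  by_cases hspos : s ≤ 0
  · -- trivial cut at 1
    refine ⟨poiuCut 1 zero_le_one le_rfl 1, ?_⟩
    have hcw : cWelfare C (poiuCut 1 zero_le_one le_rfl 1) = 1 + g 1 := hcWid 1 zero_le_one le_rfl
    have hg1 : 0 ≤ g 1 := by
      rw [hgdef]
      simp only []
      rw [C.total 0, C.total 1]
      linarith
    rw [hWs, hcw]
    have hmm : (1:ℝ)*1 ≤ (2 - 1/(k:ℝ)) * (1 + g 1) :=
      mul_le_mul hcoef1 (by linarith) (by linarith) (by linarith)
    linarith
  · push_neg at hspos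
    -- the rises of either player's pieces sum to ±s
    have hrise : ∀ (e : Fin 2) (m : Fin k),
        g (A.hi e m) - g (A.lo e m)
          = (∫ x in (A.lo e m)..(A.hi e m), C.d 0 x)
            - ∫ x in (A.lo e m)..(A.hi e m), C.d 1 x := by
      intro e m
      have hadd : ∀ i : Fin 2,
          (∫ x in (0:ℝ)..(A.lo e m), C.d i x)
            + (∫ x in (A.lo e m)..(A.hi e m), C.d i x)
          = ∫ x in (0:ℝ)..(A.hi e m), C.d i x := fun i =>
        intervalIntegral.integral_add_adjacent_intervals
          (poiu_integ C i h0mem (poiu_lo_mem A e m))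
          (poiu_integ C i (poiu_lo_mem A e m) (poiu_hi_mem A e m))
      have h0 := hadd 0
      have h1 := hadd 1
      rw [hgdef]
      simp only []
      linarith
    have hS : ∀ e : Fin 2,
        (∑ m, (g (A.hi e m) - g (A.lo e m))) = P 0 e - P 1 e := by
      intro e
      rw [Finset.sum_congr rfl fun m _ => hrise e m, Finset.sum_sub_distrib]
    -- some piece starts at 0
    obtain ⟨e0, m0, hm0⟩ : ∃ (e : Fin 2) (m : Fin k), A.lo e m = 0 := by
      have h0m : (0:ℝ) ∈ Set.Icc (0:ℝ) 1 := h0mem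
      rw [← A.cover] at h0m
      simp only [Set.mem_iUnion] at h0m
      obtain ⟨i, m, hm⟩ := h0m
      exact ⟨i, m, le_antisymm hm.1 (poiu_lo_mem A i m).1⟩
    have hval : s ≤ |∑ m, (g (A.hi e0 m) - g (A.lo e0 m))| := by
      have he : e0 = 0 ∨ e0 = 1 := by omega
      rcases he with rfl | rfl
      · rw [hS 0]
        exact le_abs_self s
      · rw [hS 1]
        have hneg : P 0 1 - P 1 1 = -s := by
          have := hPsum 0; have := hPsum 1; rw [hsdef]; linarith
        rw [hneg, abs_neg]
        exact le_abs_self s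
    set R : ℝ := s / (2*(k:ℝ) - 1) with hRdef
    obtain ⟨t, ht0, ht1, htR⟩ : ∃ t : ℝ, 0 ≤ t ∧ t ≤ 1 ∧ R ≤ |g t| := by
      by_contra hcon
      push_neg at hcon
      have hhilt : ∀ m : Fin k, |g (A.hi e0 m)| < R := fun m =>
        hcon _ (poiu_hi_mem A e0 m).1 (poiu_hi_mem A e0 m).2
      have hlolt : ∀ m : Fin k, |g (A.lo e0 m)| < R := fun m =>
        hcon _ (poiu_lo_mem A e0 m).1 (poiu_lo_mem A e0 m).2
      have hne : (Finset.univ : Finset (Fin k)).Nonempty := ⟨⟨0, hk⟩, Finset.mem_univ _⟩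
      have hsum1 : ∑ m : Fin k, |g (A.hi e0 m)| < (k:ℝ) * R := by
        calc ∑ m : Fin k, |g (A.hi e0 m)| < ∑ _m : Fin k, R :=
              Finset.sum_lt_sum_of_nonempty hne fun m _ => hhilt m
          _ = (k:ℝ) * R := by
              rw [Finset.sum_const, Finset.card_univ, Fintype.card_fin, nsmul_eq_mul]
      have hsum2 : ∑ m : Fin k, |g (A.lo e0 m)| ≤ ((k:ℝ) - 1) * R := by
        rw [← Finset.add_sum_erase _ _ (Finset.mem_univ m0)]
        have hz : |g (A.lo e0 m0)| = 0 := by rw [hm0, hg0, abs_zero]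
        rw [hz, zero_add]
        have hRnn : 0 ≤ R := le_of_lt (div_pos hspos h2k1)
        calc ∑ m ∈ Finset.univ.erase m0, |g (A.lo e0 m)|
            ≤ (Finset.univ.erase m0).card • R :=
              Finset.sum_le_card_nsmul _ _ _ fun m _ => (hlolt m).le
          _ = ((k:ℝ) - 1) * R := by
              rw [Finset.card_erase_of_mem (Finset.mem_univ _), Finset.card_univ,
                Fintype.card_fin, nsmul_eq_mul, Nat.cast_sub hk, Nat.cast_one]
      have habs : |∑ m, (g (A.hi e0 m) - g (A.lo e0 m))|
          ≤ ∑ m : Fin k, |g (A.hi e0 m)| + ∑ m : Fin k, |g (A.lo e0 m)| := by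
        calc |∑ m, (g (A.hi e0 m) - g (A.lo e0 m))|
            ≤ ∑ m, |g (A.hi e0 m) - g (A.lo e0 m)| := Finset.abs_sum_le_sum_abs _ _
          _ ≤ ∑ m, (|g (A.hi e0 m)| + |g (A.lo e0 m)|) :=
              Finset.sum_le_sum fun m _ => abs_sub _ _
          _ = _ := Finset.sum_add_distrib
      have hfin : (k:ℝ) * R + ((k:ℝ) - 1) * R = s := by
        rw [hRdef, ← add_mul, show (k:ℝ) + ((k:ℝ) - 1) = 2*(k:ℝ) - 1 by ring, mul_comm]
        exact div_mul_cancel₀ s h2k1.ne'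
      linarith
    -- construct the allocation
    rcases le_or_gt 0 (g t) with hgt | hgt
    · refine ⟨poiuCut t ht0 ht1 1, ?_⟩
      have hcw : cWelfare C (poiuCut t ht0 ht1 1) = 1 + g t := hcWid t ht0 ht1
      have habs : |g t| = g t := abs_of_nonneg hgt
      rw [hWs, hcw]
      rw [habs] at htR
      have hkey : (1:ℝ) + s ≤ (2 - 1/(k:ℝ)) * (1 + R) := by
        have hexp : (2 - 1/(k:ℝ)) * (1 + R) = (2*(k:ℝ) - 1 + s)/(k:ℝ) := by
          rw [hRdef]; field_simp
        rw [hexp, le_div_iff₀ hkpos]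
        nlinarith [mul_nonneg (sub_nonneg.2 hk1) (sub_nonneg.2 hs1)]
      calc (1:ℝ) + s ≤ (2 - 1/(k:ℝ)) * (1 + R) := hkey
        _ ≤ (2 - 1/(k:ℝ)) * (1 + g t) := by
            apply mul_le_mul_of_nonneg_left (by linarith) (by linarith)
    · refine ⟨poiuCut t ht0 ht1 (Equiv.swap 0 1), ?_⟩
      have hcw : cWelfare C (poiuCut t ht0 ht1 (Equiv.swap 0 1)) = 1 - g t :=
        hcWswap t ht0 ht1
      have habs : |g t| = -(g t) := abs_of_neg hgt
      rw [hWs, hcw]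
      rw [habs] at htR
      have hkey : (1:ℝ) + s ≤ (2 - 1/(k:ℝ)) * (1 + R) := by
        have hexp : (2 - 1/(k:ℝ)) * (1 + R) = (2*(k:ℝ) - 1 + s)/(k:ℝ) := by
          rw [hRdef]; field_simp
        rw [hexp, le_div_iff₀ hkpos]
        nlinarith [mul_nonneg (sub_nonneg.2 hk1) (sub_nonneg.2 hs1)]
      calc (1:ℝ) + s ≤ (2 - 1/(k:ℝ)) * (1 + R) := hkey
        _ ≤ (2 - 1/(k:ℝ)) * (1 - g t) := by
            apply mul_le_mul_of_nonneg_left (by linarith) (by linarith)
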